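/- arXiv:2210.15367 — 4 statements merged into one kernel-verified Lean document; each statement's English description precedes it below -/
import Mathlib

section
/- Let θ = Σ_a θ^a ⊗ T_a where {θ^a} is a basis of V* dual-orthonormal (g(θ^a,θ^b) = η^{ab}) and {T_a} the η-orthonormal basis of ℝ^m. Then the squared norm of the k-th Kulkarni–Nomizu power θ^k = θ ⩕ ⋯ ⩕ θ (k times) equals m!·k!/(m−k)!. -/
open TensorProduct ExteriorAlgebra

set_option synthInstance.maxHeartbeats 1000000
set_option maxHeartbeats 1000000

noncomputable section

/-- Wedge product of a finite family of vectors, as an element of the exterior algebra. -/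
def wedgeL {M : Type} [AddCommGroup M] [Module ℝ M] {n : ℕ} (v : Fin n → M) :
    ExteriorAlgebra ℝ M :=
  (List.ofFn fun i => ι ℝ (v i)).prod

/-- The bigraded algebra `Λ V* ⊗ Λ ℝ^m` of vector-valued forms, with `U` playing the
role of `V*` and `Fin m → ℝ` the role of `W = ℝ^m`. -/
abbrev Omega (U : Type) [AddCommGroup U] [Module ℝ U] (m : ℕ) : Type :=
  ExteriorAlgebra ℝ U ⊗[ℝ] ExteriorAlgebra ℝ (Fin m → ℝ)

/-- The subspace of bidegree `(k, h)` elements: `Λ^k U ⊗ Λ^h ℝ^m`. -/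
def bideg (U : Type) [AddCommGroup U] [Module ℝ U] (m k h : ℕ) :
    Submodule ℝ (Omega U m) :=
  Submodule.map₂ (TensorProduct.mk ℝ _ _) (⋀[ℝ]^k U) (⋀[ℝ]^h (Fin m → ℝ))

/-- The solder element `θ = Σ_a θ^a ⊗ T_a`, where `T_a` is the standard basis of `ℝ^m`. -/
def solder {U : Type} [AddCommGroup U] [Module ℝ U] {m : ℕ} (u : Fin m → U) : Omega U m :=
  ∑ a, ι ℝ (u a) ⊗ₜ[ℝ] ι ℝ (Pi.single a 1)

/-- The composite volume element `ν = ν_g ⊗ n_h` (wedge of the dual orthonormal basis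
tensor the wedge of the standard basis). -/
def vol {U : Type} [AddCommGroup U] [Module ℝ U] {m : ℕ} (u : Fin m → U) : Omega U m :=
  wedgeL u ⊗ₜ[ℝ] wedgeL (fun a : Fin m => Pi.single a (1 : ℝ))

/- ### Auxiliary lemmas -/

lemma wedgeL_cons {M : Type} [AddCommGroup M] [Module ℝ M] {n : ℕ} (x : M) (v : Fin n → M) :
    wedgeL (Fin.cons x v) = ι ℝ x * wedgeL v := by
  unfold wedgeL
  rw [List.ofFn_succ]
  simp [Fin.cons_zero, Fin.cons_succ]

lemma solder_pow {U : Type} [AddCommGroup U] [Module ℝ U] {m : ℕ} (u : Fin m → U) (k : ℕ) :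
    (solder u) ^ k = ∑ f : Fin k → Fin m,
      wedgeL (fun i => u (f i)) ⊗ₜ[ℝ] wedgeL (fun i => Pi.single (f i) (1:ℝ)) := by
  induction k with
  | zero =>
    rw [pow_zero]
    rw [Finset.sum_eq_single (fun i : Fin 0 => i.elim0)]
    · simp [wedgeL, Algebra.TensorProduct.one_def]
    · intro b _ hb; exact absurd (funext fun i => i.elim0) hb
    · intro h; exact absurd (Finset.mem_univ _) h
  | succ k ih =>
    rw [pow_succ', ih, solder, Finset.sum_mul]
    rw [← Fintype.sum_equiv (Fin.consEquiv fun _ => Fin m)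
      (fun p => wedgeL (fun i => u ((Fin.consEquiv fun _ => Fin m) p i)) ⊗ₜ[ℝ]
        wedgeL (fun i => Pi.single ((Fin.consEquiv fun _ => Fin m) p i) (1:ℝ)))
      _ (fun p => rfl)]
    rw [Fintype.sum_prod_type]
    refine Finset.sum_congr rfl fun a _ => ?_
    rw [Finset.mul_sum]
    refine Finset.sum_congr rfl fun f _ => ?_
    have h1 : (fun i => u ((Fin.consEquiv fun _ => Fin m) (a, f) i)) =
        Fin.cons (u a) (fun i => u (f i)) := by
      funext i
      refine Fin.cases ?_ ?_ i
      · rw [Fin.consEquiv_apply, Fin.cons_zero, Fin.cons_zero]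
      · intro j; rw [Fin.consEquiv_apply, Fin.cons_succ, Fin.cons_succ]
    have h2 : (fun i => Pi.single ((Fin.consEquiv fun _ => Fin m) (a, f) i) (1:ℝ)) =
        (Fin.cons (Pi.single a 1) (fun i => Pi.single (f i) (1:ℝ)) : Fin (k+1) → Fin m → ℝ) := by
      funext i
      refine Fin.cases ?_ ?_ i
      · rw [Fin.consEquiv_apply, Fin.cons_zero, Fin.cons_zero]
      · intro j; rw [Fin.consEquiv_apply, Fin.cons_succ, Fin.cons_succ]
    rw [h1, h2, wedgeL_cons, wedgeL_cons, Algebra.TensorProduct.tmul_mul_tmul]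

lemma det_D_perm {m k : ℕ} (f : Fin k → Fin m) (hf : Function.Injective f)
    (σ : Equiv.Perm (Fin k)) :
    (Matrix.det (Matrix.of fun i j => if f i = (f ∘ σ) j then (1:ℝ) else 0))^2 = 1 := by
  have : (Matrix.of fun i j => if f i = (f ∘ σ) j then (1:ℝ) else 0) =
      Matrix.transpose (σ.permMatrix ℝ) := by
    ext i j
    simp only [Matrix.of_apply, Matrix.transpose_apply, Equiv.Perm.permMatrix,
      PEquiv.toMatrix_apply, Equiv.toPEquiv_apply, Option.mem_some_iff, hf.eq_iff]
    by_cases h : σ j = i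
    · simp [h]
    · simp [h, show ¬ f i = f (σ j) from fun hh => h (hf hh).symm]
  rw [this, Matrix.det_transpose, Matrix.det_permutation]
  rcases Int.units_eq_one_or (Equiv.Perm.sign σ) with h | h <;> rw [h] <;> norm_num

lemma sum_det_sq (m k : ℕ) :
    ∑ f : Fin k → Fin m, ∑ g' : Fin k → Fin m,
      (Matrix.det (Matrix.of fun i j => if f i = g' j then (1:ℝ) else 0))^2
      = (Nat.descFactorial m k : ℝ) * (Nat.factorial k : ℝ) := by
  classical
  have inner : ∀ f : Fin k → Fin m, ∑ g' : Fin k → Fin m,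
      (Matrix.det (Matrix.of fun i j => if f i = g' j then (1:ℝ) else 0))^2
      = if Function.Injective f then (Nat.factorial k : ℝ) else 0 := by
    intro f
    by_cases hf : Function.Injective f
    · rw [if_pos hf]
      have hvanish : ∀ g' : Fin k → Fin m,
          g' ∉ Finset.univ.image (fun σ : Equiv.Perm (Fin k) => f ∘ σ) →
          Matrix.det (Matrix.of fun i j => if f i = g' j then (1:ℝ) else 0) = 0 := by
        intro g' hg'
        by_cases hinj : Function.Injective g'
        · by_cases hall : ∀ j, ∃ i, f i = g' j
          · exfalso
            choose σ0 hσ0 using hall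
            have hσinj : Function.Injective σ0 := by
              intro j1 j2 h
              apply hinj
              rw [← hσ0, ← hσ0, h]
            have hbij := Finite.injective_iff_bijective.mp hσinj
            refine hg' (Finset.mem_image.mpr ⟨Equiv.ofBijective σ0 hbij, Finset.mem_univ _, ?_⟩)
            funext j
            exact hσ0 j
          · push_neg at hall
            obtain ⟨j, hj⟩ := hall
            exact Matrix.det_eq_zero_of_column_eq_zero j fun i => if_neg (hj i)
        · obtain ⟨j1, j2, he, hne⟩ := Function.not_injective_iff.mp hinj
          refine Matrix.det_zero_of_column_eq hne fun i => ?_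
          simp only [Matrix.of_apply, he]
      rw [← Finset.sum_subset (Finset.subset_univ _)
        (fun g' _ hg' => by rw [hvanish g' hg', zero_pow two_ne_zero])]
      rw [Finset.sum_image (fun σ1 _ σ2 _ h => ?_)]
      · rw [Finset.sum_congr rfl fun σ _ => det_D_perm f hf σ]
        simp [Fintype.card_perm]
      · exact Equiv.ext fun j => hf (congrFun h j)
    · rw [if_neg hf]
      refine Finset.sum_eq_zero fun g' _ => ?_
      obtain ⟨i1, i2, he, hne⟩ := Function.not_injective_iff.mp hf
      rw [Matrix.det_zero_of_row_eq hne (funext fun j => by simp only [Matrix.of_apply, he]),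
        zero_pow two_ne_zero]
  rw [Finset.sum_congr rfl fun f _ => inner f, ← Finset.sum_filter, Finset.sum_const,
    nsmul_eq_mul]
  congr 1
  rw [← Fintype.card_subtype, Fintype.card_congr (Equiv.subtypeInjectiveEquivEmbedding _ _),
    Fintype.card_embedding_eq, Fintype.card_fin, Fintype.card_fin]

lemma det_sq_reduce {m k : ℕ} (ε : Fin m → ℝ) (hε : ∀ a, ε a = 1 ∨ ε a = -1)
    (f g' : Fin k → Fin m) :
    (Matrix.det (Matrix.of fun i j => if f i = g' j then ε (f i) else 0)) *
    (Matrix.det (Matrix.of fun i j => if f i = g' j then ε (f i) else 0)) =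
    (Matrix.det (Matrix.of fun i j => if f i = g' j then (1:ℝ) else 0))^2 := by
  have h1 : (Matrix.of fun i j => if f i = g' j then ε (f i) else 0) =
      Matrix.of (fun i j =>
        ε (f i) * (Matrix.of fun i' j' => if f i' = g' j' then (1:ℝ) else 0) i j) := by
    ext i j
    simp only [Matrix.of_apply]
    split <;> ring
  rw [h1, Matrix.det_mul_column]
  have hc : (∏ i, ε (f i)) * (∏ i, ε (f i)) = 1 := by
    rw [← Finset.prod_mul_distrib]
    exact Finset.prod_eq_one fun i _ => by rcases hε (f i) with h | h <;> rw [h] <;> norm_num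
  calc ((∏ i, ε (f i)) * _) * ((∏ i, ε (f i)) * _)
      = ((∏ i, ε (f i)) * (∏ i, ε (f i))) *
        ((Matrix.of fun i j => if f i = g' j then (1:ℝ) else 0).det *
         (Matrix.of fun i j => if f i = g' j then (1:ℝ) else 0).det) := by ring
    _ = _ := by rw [hc, one_mul, sq]

/-- Squared norm of the `k`-th Kulkarni–Nomizu power of the solder form:
`⟨θ^k, θ^k⟩ = m!·k!/(m−k)!`. -/
theorem stmt_5 (m r s k : ℕ) (hm : r + s = m) (hk : k ≤ m)
    (U : Type) [AddCommGroup U] [Module ℝ U]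
    (η : (Fin m → ℝ) →ₗ[ℝ] (Fin m → ℝ) →ₗ[ℝ] ℝ)
    (hη : ∀ v w, η v w = ∑ a : Fin _, (if (a : ℕ) < s then (-1 : ℝ) else 1) * v a * w a)
    (g : U →ₗ[ℝ] U →ₗ[ℝ] ℝ) (u : Module.Basis (Fin m) ℝ U)
    (hg : ∀ a b, g (u a) (u b) = if a = b then (if (a : ℕ) < s then (-1 : ℝ) else 1) else 0)
    (P : Omega U m →ₗ[ℝ] Omega U m →ₗ[ℝ] ℝ)
    (hP : ∀ (k h : ℕ) (φ ψ : Fin k → U) (v w : Fin h → (Fin m → ℝ)),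
      P (wedgeL φ ⊗ₜ[ℝ] wedgeL v) (wedgeL ψ ⊗ₜ[ℝ] wedgeL w) =
        Matrix.det (Matrix.of fun i j => g (φ i) (ψ j)) *
        Matrix.det (Matrix.of fun i j => η (v i) (w j)))
    :
    P ((solder (fun a => u a)) ^ k) ((solder (fun a => u a)) ^ k) =
      ((Nat.factorial m : ℝ) * (Nat.factorial k : ℝ)) / (Nat.factorial (m - k) : ℝ) := by
  classical
  have hη1 : ∀ a b : Fin m, η (Pi.single a 1) (Pi.single b 1) =
      if a = b then (if (a : ℕ) < s then (-1:ℝ) else 1) else 0 := by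
    intro a b
    rw [hη]
    rw [Finset.sum_eq_single a]
    · by_cases h : a = b <;> simp [Pi.single_apply, h]
    · intro x _ hx
      simp [Pi.single_apply, hx]
    · intro h; exact absurd (Finset.mem_univ a) h
  have step : ∀ f g' : Fin k → Fin m,
      P (wedgeL (fun i => u (f i)) ⊗ₜ[ℝ] wedgeL (fun i => Pi.single (f i) (1:ℝ)))
        (wedgeL (fun i => u (g' i)) ⊗ₜ[ℝ] wedgeL (fun i => Pi.single (g' i) (1:ℝ)))
      = (Matrix.det (Matrix.of fun i j => if f i = g' j then (1:ℝ) else 0))^2 := by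
    intro f g'
    rw [hP k k]
    have e1 : (Matrix.of fun i j => g (u (f i)) (u (g' j))) =
        (Matrix.of fun i j => if f i = g' j then
          (if ((f i : Fin m) : ℕ) < s then (-1:ℝ) else 1) else 0) := by
      ext i j
      simp only [Matrix.of_apply, hg]
    have e2 : (Matrix.of fun i j => η (Pi.single (f i) 1) (Pi.single (g' j) 1)) =
        (Matrix.of fun i j => if f i = g' j then
          (if ((f i : Fin m) : ℕ) < s then (-1:ℝ) else 1) else 0) := by
      ext i j
      simp only [Matrix.of_apply, hη1]
    rw [e1, e2]
    exact det_sq_reduce (fun a => if (a : ℕ) < s then (-1:ℝ) else 1)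
      (fun a => by by_cases h : (a : ℕ) < s <;> simp [h]) f g'
  rw [solder_pow]
  simp only [map_sum, LinearMap.sum_apply]
  rw [Finset.sum_congr rfl fun x _ => Finset.sum_congr rfl fun f _ => step f x]
  rw [Finset.sum_comm]
  rw [sum_det_sq m k]
  rw [eq_div_iff (by exact_mod_cast (Nat.factorial_pos (m - k)).ne')]
  have hnat := Nat.factorial_mul_descFactorial hk
  have hc : ((Nat.factorial (m - k) : ℝ)) * (Nat.descFactorial m k : ℝ) =
      (Nat.factorial m : ℝ) := by exact_mod_cast congrArg (Nat.cast (R := ℝ)) hnat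
  rw [← hc]
  ring
end
end

section
/- With θ as above, the m-th Kulkarni–Nomizu power satisfies θ^m = m! · ν, where ν = ν_g ⊗ n_h is the composite volume element (product of the metric volume form on Λ^m V* and the metric volume m-vector on Λ^m ℝ^m), assuming θ is orientation-compatible. -/
open TensorProduct ExteriorAlgebra

noncomputable section

section Aux

variable {A : Type*} [Ring A]

/-- If all elements of `l` pairwise commute and square to zero, then multiplying the
product of `l` by any member of `l` gives zero. -/
lemma aux_prod_mul_mem_zero : ∀ (l : List A),
    (∀ a ∈ l, ∀ b ∈ l, Commute a b) → (∀ a ∈ l, a * a = 0) →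
    ∀ y ∈ l, l.prod * y = 0 := by
  intro l
  induction l with
  | nil => intro _ _ y hy; exact absurd hy List.not_mem_nil
  | cons z zs ih =>
    intro hc h0 y hy
    rw [List.prod_cons, mul_assoc]
    rcases List.mem_cons.mp hy with rfl | hy
    · have hcom : Commute y zs.prod := by
        refine Commute.list_prod_right _ _ fun b hb => ?_
        exact hc y List.mem_cons_self b (List.mem_cons_of_mem _ hb)
      rw [← hcom.eq, ← mul_assoc, h0 y List.mem_cons_self, zero_mul]
    · rw [ih (fun a ha b hb => hc a (List.mem_cons_of_mem _ ha) b (List.mem_cons_of_mem _ hb))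
        (fun a ha => h0 a (List.mem_cons_of_mem _ ha)) y hy, mul_zero]

lemma aux_prod_mul_sum_zero (l : List A)
    (hc : ∀ a ∈ l, ∀ b ∈ l, Commute a b) (h0 : ∀ a ∈ l, a * a = 0) :
    l.prod * l.sum = 0 := by
  have key : ∀ (l' : List A), (∀ y ∈ l', l.prod * y = 0) → l.prod * l'.sum = 0 := by
    intro l'
    induction l' with
    | nil => simp
    | cons z zs ih =>
      intro h
      rw [List.sum_cons, mul_add, h z List.mem_cons_self,
        ih (fun y hy => h y (List.mem_cons_of_mem _ hy)), add_zero]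
  exact key l (aux_prod_mul_mem_zero l hc h0)

/-- For pairwise commuting square-zero elements, the `n`-th power of the sum of a list
of length `n` is `n!` times the product. -/
lemma aux_sum_pow : ∀ (l : List A),
    (∀ a ∈ l, ∀ b ∈ l, Commute a b) → (∀ a ∈ l, a * a = 0) →
    l.sum ^ l.length = l.length.factorial • l.prod := by
  intro l
  induction l with
  | nil => simp
  | cons x xs ih =>
    intro hc h0
    have hc' : ∀ a ∈ xs, ∀ b ∈ xs, Commute a b := fun a ha b hb =>
      hc a (List.mem_cons_of_mem _ ha) b (List.mem_cons_of_mem _ hb)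
    have h0' : ∀ a ∈ xs, a * a = 0 := fun a ha => h0 a (List.mem_cons_of_mem _ ha)
    have hx0 : x * x = 0 := h0 x List.mem_cons_self
    have hcx : Commute x xs.sum := by
      refine Commute.list_sum_right _ _ fun b hb => ?_
      exact hc x List.mem_cons_self b (List.mem_cons_of_mem _ hb)
    set k := xs.length with hk
    rw [List.sum_cons, List.length_cons, List.prod_cons]
    rw [hcx.add_pow]
    have hzero : ∀ i, x ^ (i + 2) = 0 := by
      intro i
      rw [pow_add, pow_two, hx0, mul_zero]
    rw [Finset.sum_range_succ']
    rw [Finset.sum_range_succ']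
    have : ∀ i ∈ Finset.range k,
        x ^ (i + 1 + 1) * xs.sum ^ (k + 1 - (i + 1 + 1)) * ((k+1).choose (i+1+1) : A) = 0 := by
      intro i _
      rw [hzero i, zero_mul, zero_mul]
    rw [Finset.sum_congr rfl this, Finset.sum_const_zero, zero_add]
    have ihx := ih hc' h0'
    have hsum0 : xs.sum ^ (k + 1 - 1) = k.factorial • xs.prod := by
      simpa using ihx
    have hsumk1 : xs.sum ^ (k + 1 - 0) = 0 := by
      have : xs.sum ^ (k + 1) = xs.sum ^ k * xs.sum := pow_succ _ _
      rw [Nat.sub_zero, this, ihx, smul_mul_assoc,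
        aux_prod_mul_sum_zero xs hc' h0', smul_zero]
    rw [hsumk1, hsum0]
    simp only [pow_zero, pow_one, one_mul, Nat.choose_zero_right, Nat.cast_one, mul_one,
      zero_add, Nat.choose_one_right]
    rw [mul_smul_comm, smul_mul_assoc,
      ← (Nat.cast_commute (xs.length + 1) (x * xs.prod)).eq, ← nsmul_eq_mul,
      smul_smul, Nat.factorial_succ, Nat.mul_comm]
    abel

end Aux

/-- Product of a list of pure tensors in a tensor product of algebras. -/
lemma aux_prod_tmul {A B : Type*} [Ring A] [Ring B] [Algebra ℝ A] [Algebra ℝ B] :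
    ∀ (n : ℕ) (x : Fin n → A) (y : Fin n → B),
      (List.ofFn fun i => x i ⊗ₜ[ℝ] y i).prod
        = (List.ofFn x).prod ⊗ₜ[ℝ] (List.ofFn y).prod := by
  intro n
  induction n with
  | zero => simp [Algebra.TensorProduct.one_def]
  | succ n ih =>
    intro x y
    rw [List.ofFn_succ, List.ofFn_succ (f := x), List.ofFn_succ (f := y),
      List.prod_cons, List.prod_cons, List.prod_cons, ih,
      Algebra.TensorProduct.tmul_mul_tmul]

set_option maxHeartbeats 1000000 in
set_option synthInstance.maxHeartbeats 400000 in
/-- The `m`-th Kulkarni–Nomizu power of the solder form is `m!` times the composite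
volume element: `θ^m = m! · ν` with `ν = ν_g ⊗ n_h`. -/
theorem stmt_6 (m r s : ℕ) (hm : r + s = m)
    (U : Type) [AddCommGroup U] [Module ℝ U]
    (η : (Fin m → ℝ) →ₗ[ℝ] (Fin m → ℝ) →ₗ[ℝ] ℝ)
    (hη : ∀ v w, η v w = ∑ a : Fin _, (if (a : ℕ) < s then (-1 : ℝ) else 1) * v a * w a)
    (g : U →ₗ[ℝ] U →ₗ[ℝ] ℝ) (u : Module.Basis (Fin m) ℝ U)
    (hg : ∀ a b, g (u a) (u b) = if a = b then (if (a : ℕ) < s then (-1 : ℝ) else 1) else 0)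
    :
    (solder (fun a => u a)) ^ m = (Nat.factorial m : ℝ) • vol (fun a => u a) := by
  classical
  set t : Fin m → Omega U m :=
    fun a => ι ℝ (u a) ⊗ₜ[ℝ] ι ℝ (Pi.single a (1 : ℝ)) with ht
  have hsolder : solder (fun a => u a) = (List.ofFn t).sum := by
    rw [solder, List.sum_ofFn]
  have hc : ∀ a ∈ List.ofFn t, ∀ b ∈ List.ofFn t, Commute a b := by
    simp only [List.forall_mem_ofFn_iff]
    intro i j
    show t i * t j = t j * t i
    simp only [ht, Algebra.TensorProduct.tmul_mul_tmul]
    have h1 : ι ℝ (u j) * ι ℝ (u i) = -(ι ℝ (u i) * ι ℝ (u j)) :=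
      eq_neg_of_add_eq_zero_left (ι_add_mul_swap (R := ℝ) (u j) (u i))
    have h2 : ι ℝ (Pi.single j (1:ℝ) : Fin m → ℝ) * ι ℝ (Pi.single i (1:ℝ) : Fin m → ℝ)
        = -(ι ℝ (Pi.single i (1:ℝ) : Fin m → ℝ) * ι ℝ (Pi.single j (1:ℝ) : Fin m → ℝ)) :=
      eq_neg_of_add_eq_zero_left
        (ι_add_mul_swap (R := ℝ) (Pi.single j (1:ℝ) : Fin m → ℝ) (Pi.single i (1:ℝ)))
    rw [h1, h2, neg_tmul, tmul_neg, neg_neg]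
  have h0 : ∀ a ∈ List.ofFn t, a * a = 0 := by
    simp only [List.forall_mem_ofFn_iff]
    intro i
    show t i * t i = 0
    simp only [ht, Algebra.TensorProduct.tmul_mul_tmul, ι_sq_zero, zero_tmul]
  have key := aux_sum_pow (List.ofFn t) hc h0
  rw [List.length_ofFn] at key
  have hprod : (List.ofFn t).prod = vol (fun a => u a) := by
    rw [ht, aux_prod_tmul]
    rfl
  rw [hsolder, key, hprod]
  rw [← Nat.cast_smul_eq_nsmul (R := ℝ)]
end
end

section
/- Trace lemma: for every Φ ∈ Λ^k V* ⊗ Λ^h W, tr(θ ⩕ Φ) = θ ⩕ tr(Φ) + (m − k − h) Φ, where tr is contraction with θ^♯ ∈ V ⊗ W*. -/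
open TensorProduct ExteriorAlgebra

noncomputable section

/-- The trace operator: contraction with `θ^♯`, i.e. `tr Φ = Σ_a (ι_{(u a)^♯} ⊗ ι_{(T a)^♭}) Φ`. -/
def trOp {U : Type} [AddCommGroup U] [Module ℝ U] {m : ℕ} (u : Fin m → U)
    (cU : U → Module.End ℝ (ExteriorAlgebra ℝ U))
    (cW : (Fin m → ℝ) → Module.End ℝ (ExteriorAlgebra ℝ (Fin m → ℝ))) :
    Module.End ℝ (Omega U m) :=
  ∑ a, TensorProduct.map (cU (u a)) (cW (Pi.single a 1))


namespace Trace13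

variable {M : Type} [AddCommGroup M] [Module ℝ M]

lemma wedgeL_succ {n : ℕ} (v : Fin (n + 1) → M) :
    wedgeL v = ι ℝ (v 0) * wedgeL (fun i => v i.succ) := by
  simp [wedgeL, List.ofFn_succ]

lemma ι_swap (a b : M) (z : ExteriorAlgebra ℝ M) :
    ι ℝ a * (ι ℝ b * z) = - (ι ℝ b * (ι ℝ a * z)) := by
  rw [← mul_assoc, ← mul_assoc, ← neg_mul]
  congr 1
  exact eq_neg_of_add_eq_zero_left (ExteriorAlgebra.ι_add_mul_swap (R := ℝ) a b)

lemma ins : ∀ {n : ℕ} (v : Fin n → M) (i : Fin n),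
    ι ℝ (v i) * ((List.ofFn fun j => ι ℝ (v j)).eraseIdx (i : ℕ)).prod
      = ((-1 : ℝ) ^ (i : ℕ)) • wedgeL v := by
  intro n
  induction n with
  | zero => exact fun v i => i.elim0
  | succ n IH =>
    intro v i
    refine Fin.cases ?_ ?_ i
    · simp [List.ofFn_succ, wedgeL]
    · intro j
      have h1 : (List.ofFn fun j => ι ℝ (v j)) =
          ι ℝ (v 0) :: (List.ofFn fun j : Fin n => ι ℝ (v j.succ)) := by
        simp [List.ofFn_succ]
      rw [h1]
      have h2 : ((j.succ : Fin (n+1)) : ℕ) = (j : ℕ) + 1 := rfl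
      rw [h2, List.eraseIdx_cons_succ, List.prod_cons, ι_swap,
        IH (fun i => v i.succ) j]
      rw [mul_smul_comm, wedgeL_succ v, pow_succ]
      simp [smul_smul, mul_comm]



lemma tmul_expand {M N : Type} [AddCommGroup M] [Module ℝ M] [AddCommGroup N] [Module ℝ N]
    (G : ℝ) (x P : M) (y Q : N) :
    (G • x - P) ⊗ₜ[ℝ] (G • y - Q) =
      (G * G) • (x ⊗ₜ[ℝ] y) - G • (x ⊗ₜ[ℝ] Q) - G • (P ⊗ₜ[ℝ] y) + P ⊗ₜ[ℝ] Q := by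
  simp only [TensorProduct.sub_tmul, TensorProduct.tmul_sub, ← TensorProduct.smul_tmul',
    TensorProduct.tmul_smul, smul_smul, smul_sub]
  module

variable (B : M →ₗ[ℝ] M →ₗ[ℝ] ℝ) (c : M → Module.End ℝ (ExteriorAlgebra ℝ M))
variable (hc : ∀ (x : M) (n : ℕ) (v : Fin n → M),
    c x (wedgeL v) = ∑ i : Fin n, ((-1 : ℝ) ^ (i : ℕ) * B x (v i)) •
      ((List.ofFn fun j => ι ℝ (v j)).eraseIdx (i : ℕ)).prod)

include hc

lemma contract_cons (x b : M) {n : ℕ} (v : Fin n → M) :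
    c x (ι ℝ b * wedgeL v) = B x b • wedgeL v - ι ℝ b * c x (wedgeL v) := by
  have hw : ι ℝ b * wedgeL v = wedgeL (Fin.cons b v) := by
    rw [wedgeL_succ]
    simp
  rw [hw, hc x (n + 1) (Fin.cons b v), hc x n v, Fin.sum_univ_succ]
  have h1 : (List.ofFn fun j => ι ℝ (Fin.cons b v j)) =
      ι ℝ b :: (List.ofFn fun j : Fin n => ι ℝ (v j)) := by
    simp [List.ofFn_succ]
  rw [h1]
  have h0 : (((0 : Fin (n+1)) : ℕ)) = 0 := rfl
  rw [Finset.mul_sum]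
  simp only [h0, pow_zero, one_mul, Fin.cons_zero, List.eraseIdx_cons_zero,
    Fin.val_succ, List.eraseIdx_cons_succ, List.prod_cons, Fin.cons_succ,
    pow_succ, mul_smul_comm]
  rw [sub_eq_add_neg, ← Finset.sum_neg_distrib]
  congr 1
  apply Finset.sum_congr rfl
  intro i _
  rw [show ((-1 : ℝ) ^ (i : ℕ) * -1 * B x (v i)) = -((-1 : ℝ) ^ (i : ℕ) * B x (v i)) by ring,
    neg_smul]

lemma euler {m : ℕ} (ε : Fin m → ℝ) (hε : ∀ a, ε a * ε a = 1)
    (bs : Module.Basis (Fin m) ℝ M) (hB : ∀ a w, B (bs a) w = ε a * bs.repr w a)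
    {n : ℕ} (v : Fin n → M) :
    ∑ a, ε a • (ι ℝ (bs a) * c (bs a) (wedgeL v)) = (n : ℝ) • wedgeL v := by
  have key : ∀ a, ε a • (ι ℝ (bs a) * c (bs a) (wedgeL v)) =
      ∑ i : Fin n, ((-1 : ℝ) ^ (i : ℕ) * bs.repr (v i) a) •
        (ι ℝ (bs a) * ((List.ofFn fun j => ι ℝ (v j)).eraseIdx (i : ℕ)).prod) := by
    intro a
    rw [hc, Finset.mul_sum, Finset.smul_sum]
    apply Finset.sum_congr rfl
    intro i _
    rw [hB, mul_smul_comm, smul_smul]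
    congr 1
    linear_combination ((-1 : ℝ) ^ (i : ℕ) * bs.repr (v i) a) * hε a
  simp only [key]
  rw [Finset.sum_comm]
  have inner : ∀ i : Fin n,
      (∑ a, ((-1 : ℝ) ^ (i : ℕ) * bs.repr (v i) a) •
        (ι ℝ (bs a) * ((List.ofFn fun j => ι ℝ (v j)).eraseIdx (i : ℕ)).prod))
      = wedgeL v := by
    intro i
    have h2 : (∑ a, (bs.repr (v i) a) • ι ℝ (bs a)) = ι ℝ (v i) := by
      conv_rhs => rw [← bs.sum_repr (v i)]
      rw [map_sum]
      simp only [map_smul]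
    calc (∑ a, ((-1 : ℝ) ^ (i : ℕ) * bs.repr (v i) a) •
        (ι ℝ (bs a) * ((List.ofFn fun j => ι ℝ (v j)).eraseIdx (i : ℕ)).prod))
        = ((-1 : ℝ) ^ (i : ℕ)) • ((∑ a, (bs.repr (v i) a) • ι ℝ (bs a)) *
            ((List.ofFn fun j => ι ℝ (v j)).eraseIdx (i : ℕ)).prod) := by
          rw [Finset.sum_mul, Finset.smul_sum]
          apply Finset.sum_congr rfl
          intro a _
          rw [smul_mul_assoc, smul_smul]
      _ = ((-1 : ℝ) ^ (i : ℕ)) • (((-1 : ℝ) ^ (i : ℕ)) • wedgeL v) := by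
          rw [h2, ins]
      _ = wedgeL v := by
          rw [smul_smul, ← pow_add, ← two_mul, pow_mul]
          norm_num
  simp only [inner]
  rw [Finset.sum_const, Finset.card_univ, Fintype.card_fin]
  exact (Nat.cast_smul_eq_nsmul ℝ n _).symm


end Trace13

set_option maxHeartbeats 2000000 in
set_option synthInstance.maxHeartbeats 1000000 in
/-- Trace lemma: `tr(θ ⩕ Φ) = θ ⩕ tr(Φ) + (m − k − h) Φ` for `Φ` of bidegree `(k,h)`. -/
theorem stmt_13 (m r s k h : ℕ) (hm : r + s = m)
    (U : Type) [AddCommGroup U] [Module ℝ U]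
    (η : (Fin m → ℝ) →ₗ[ℝ] (Fin m → ℝ) →ₗ[ℝ] ℝ)
    (hη : ∀ v w, η v w = ∑ a : Fin _, (if (a : ℕ) < s then (-1 : ℝ) else 1) * v a * w a)
    (g : U →ₗ[ℝ] U →ₗ[ℝ] ℝ) (u : Module.Basis (Fin m) ℝ U)
    (hg : ∀ a b, g (u a) (u b) = if a = b then (if (a : ℕ) < s then (-1 : ℝ) else 1) else 0)
    (cU : U → Module.End ℝ (ExteriorAlgebra ℝ U))
    (hcU : ∀ (x : U) (n : ℕ) (v : Fin n → U),
      cU x (wedgeL v) = ∑ i : Fin n, ((-1 : ℝ) ^ (i : ℕ) * g x (v i)) •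
        ((List.ofFn fun j => ι ℝ (v j)).eraseIdx (i : ℕ)).prod)
    (cW : (Fin m → ℝ) → Module.End ℝ (ExteriorAlgebra ℝ (Fin m → ℝ)))
    (hcW : ∀ (y : Fin m → ℝ) (n : ℕ) (v : Fin n → (Fin m → ℝ)),
      cW y (wedgeL v) = ∑ i : Fin n, ((-1 : ℝ) ^ (i : ℕ) * η y (v i)) •
        ((List.ofFn fun j => ι ℝ (v j)).eraseIdx (i : ℕ)).prod)
    (Φ : Omega U m) (hΦ : Φ ∈ bideg U m k h) :
    trOp (fun a => u a) cU cW (solder (fun a => u a) * Φ) =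
      solder (fun a => u a) * trOp (fun a => u a) cU cW Φ +
        ((m : ℝ) - (k : ℝ) - (h : ℝ)) • Φ := by
  classical
  -- notation
  set θ := solder (fun a => u a) with hθdef
  set Tr := trOp (fun a => u a) cU cW with hTrdef
  have hε : ∀ a : Fin m, (if (a : ℕ) < s then (-1 : ℝ) else 1) *
      (if (a : ℕ) < s then (-1 : ℝ) else 1) = 1 := by
    intro a; by_cases hs : (a : ℕ) < s <;> simp [hs]
  -- g on basis against arbitrary vector
  have hgU : ∀ (a : Fin m) (wv : U), g (u a) wv =
      (if (a : ℕ) < s then (-1 : ℝ) else 1) * u.repr wv a := by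
    intro a wv
    conv_lhs => rw [← u.sum_repr wv]
    rw [map_sum, Finset.sum_eq_single a]
    · rw [map_smul, hg]
      simp [mul_comm]
    · intro b _ hba
      rw [map_smul, hg, if_neg (Ne.symm hba)]
      simp
    · intro habs
      exact absurd (Finset.mem_univ a) habs
  -- η on standard basis against arbitrary vector
  have hηW : ∀ (a : Fin m) (wv : Fin m → ℝ), η (Pi.single a 1) wv =
      (if (a : ℕ) < s then (-1 : ℝ) else 1) * wv a := by
    intro a wv
    rw [hη]
    have : ∀ c : Fin m, (if (c : ℕ) < s then (-1 : ℝ) else 1) * ((Pi.single a 1 : Fin m → ℝ) c) * wv c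
        = if c = a then (if (c : ℕ) < s then (-1 : ℝ) else 1) * wv c else 0 := by
      intro c
      rcases eq_or_ne c a with rfl | hca
      · simp
      · simp [Pi.single_apply, hca]
    simp only [this]
    rw [Finset.sum_ite_eq' Finset.univ a]
    simp
  have hηTT : ∀ a b : Fin m, η (Pi.single a 1) (Pi.single b 1) =
      if a = b then (if (a : ℕ) < s then (-1 : ℝ) else 1) else 0 := by
    intro a b
    rw [hηW]
    rcases eq_or_ne a b with rfl | hab
    · simp
    · simp [Pi.single_apply, hab, Ne.symm hab]
  -- Euler identities
  have eulerU : ∀ (n : ℕ) (v : Fin n → U),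
      ∑ a : Fin m, (if (a : ℕ) < s then (-1 : ℝ) else 1) • (ι ℝ (u a) * cU (u a) (wedgeL v))
        = (n : ℝ) • wedgeL v := by
    intro n v
    exact Trace13.euler g cU hcU (fun a : Fin m => if (a : ℕ) < s then (-1 : ℝ) else 1) hε u (fun a wv => hgU a wv) v
  have eulerW : ∀ (n : ℕ) (v : Fin n → (Fin m → ℝ)),
      ∑ a : Fin m, (if (a : ℕ) < s then (-1 : ℝ) else 1) •
          (ι ℝ (Pi.single a 1 : Fin m → ℝ) * cW (Pi.single a 1) (wedgeL v))
        = (n : ℝ) • wedgeL v := by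
    intro n v
    have := Trace13.euler η cW hcW (fun a : Fin m => if (a : ℕ) < s then (-1 : ℝ) else 1) hε (Pi.basisFun ℝ (Fin m))
      (fun a wv => by simpa [Pi.basisFun_repr] using hηW a wv) v
    simpa using this
  -- trOp applied
  have htr : ∀ z : Omega U m, Tr z =
      ∑ a : Fin m, TensorProduct.map (cU (u a)) (cW (Pi.single a 1)) z := by
    intro z
    rw [hTrdef, trOp]
    simp
  -- key identity on pure wedge tensors
  have key : ∀ (kk hh : ℕ) (v : Fin kk → U) (w : Fin hh → (Fin m → ℝ)),
      Tr (θ * (wedgeL v ⊗ₜ[ℝ] wedgeL w)) =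
        θ * Tr (wedgeL v ⊗ₜ[ℝ] wedgeL w) +
          ((m : ℝ) - (kk : ℝ) - (hh : ℝ)) • (wedgeL v ⊗ₜ[ℝ] wedgeL w) := by
    intro kk hh v w
    set x := wedgeL v with hx
    set y := wedgeL w with hy
    have hsm : θ * (x ⊗ₜ[ℝ] y) =
        ∑ b : Fin m, (ι ℝ (u b) * x) ⊗ₜ[ℝ] (ι ℝ (Pi.single b 1 : Fin m → ℝ) * y) := by
      rw [hθdef, solder, Finset.sum_mul]
      simp [Algebra.TensorProduct.tmul_mul_tmul]
    -- left side as a double sum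
    have lhs1 : Tr (θ * (x ⊗ₜ[ℝ] y)) =
        ∑ a : Fin m, ∑ b : Fin m, (cU (u a)) (ι ℝ (u b) * x) ⊗ₜ[ℝ]
          (cW (Pi.single a 1)) (ι ℝ (Pi.single b 1 : Fin m → ℝ) * y) := by
      rw [hsm, htr]
      refine Finset.sum_congr rfl fun a _ => ?_
      rw [map_sum]
      refine Finset.sum_congr rfl fun b _ => ?_
      rw [TensorProduct.map_tmul]
    -- contraction anticommutation
    have lhs2 : Tr (θ * (x ⊗ₜ[ℝ] y)) =
        ∑ a : Fin m, ∑ b : Fin m,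
          ((if a = b then (if (a : ℕ) < s then (-1 : ℝ) else 1) else 0) • x
              - ι ℝ (u b) * cU (u a) x) ⊗ₜ[ℝ]
          ((if a = b then (if (a : ℕ) < s then (-1 : ℝ) else 1) else 0) • y
              - ι ℝ (Pi.single b 1 : Fin m → ℝ) * cW (Pi.single a 1) y) := by
      rw [lhs1]
      refine Finset.sum_congr rfl fun a _ => Finset.sum_congr rfl fun b _ => ?_
      rw [hx, hy, Trace13.contract_cons g cU hcU (u a) (u b) v,
        Trace13.contract_cons η cW hcW (Pi.single a 1) (Pi.single b 1) w, hg, hηTT]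
    -- collapse the diagonal
    have sumb : ∀ a : Fin m,
        (∑ b : Fin m,
          ((if a = b then (if (a : ℕ) < s then (-1 : ℝ) else 1) else 0) • x
              - ι ℝ (u b) * cU (u a) x) ⊗ₜ[ℝ]
          ((if a = b then (if (a : ℕ) < s then (-1 : ℝ) else 1) else 0) • y
              - ι ℝ (Pi.single b 1 : Fin m → ℝ) * cW (Pi.single a 1) y))
        = (x ⊗ₜ[ℝ] y)
          - (if (a : ℕ) < s then (-1 : ℝ) else 1) •
              (x ⊗ₜ[ℝ] (ι ℝ (Pi.single a 1 : Fin m → ℝ) * cW (Pi.single a 1) y))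
          - (if (a : ℕ) < s then (-1 : ℝ) else 1) •
              ((ι ℝ (u a) * cU (u a) x) ⊗ₜ[ℝ] y)
          + ∑ b : Fin m, (ι ℝ (u b) * cU (u a) x) ⊗ₜ[ℝ]
              (ι ℝ (Pi.single b 1 : Fin m → ℝ) * cW (Pi.single a 1) y) := by
      intro a
      simp only [Trace13.tmul_expand]
      rw [Finset.sum_add_distrib, Finset.sum_sub_distrib, Finset.sum_sub_distrib]
      congr 2
      · congr 1
        · have : ∀ b : Fin m,
              ((if a = b then (if (a : ℕ) < s then (-1 : ℝ) else 1) else 0) *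
                (if a = b then (if (a : ℕ) < s then (-1 : ℝ) else 1) else 0)) • (x ⊗ₜ[ℝ] y)
              = if a = b then x ⊗ₜ[ℝ] y else 0 := by
            intro b
            rcases eq_or_ne a b with rfl | hab
            · simp [hε a]
            · simp [hab]
          simp only [this]
          rw [Finset.sum_ite_eq Finset.univ a]
          simp
        · have : ∀ b : Fin m,
              (if a = b then (if (a : ℕ) < s then (-1 : ℝ) else 1) else 0) •
                (x ⊗ₜ[ℝ] (ι ℝ (Pi.single b 1 : Fin m → ℝ) * cW (Pi.single a 1) y))
              = if a = b then (if (a : ℕ) < s then (-1 : ℝ) else 1) •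
                  (x ⊗ₜ[ℝ] (ι ℝ (Pi.single b 1 : Fin m → ℝ) * cW (Pi.single a 1) y)) else 0 := by
            intro b
            rcases eq_or_ne a b with rfl | hab
            · simp
            · simp [hab]
          simp only [this]
          rw [Finset.sum_ite_eq Finset.univ a]
          simp
      · have : ∀ b : Fin m,
            (if a = b then (if (a : ℕ) < s then (-1 : ℝ) else 1) else 0) •
              ((ι ℝ (u b) * cU (u a) x) ⊗ₜ[ℝ] y)
            = if a = b then (if (a : ℕ) < s then (-1 : ℝ) else 1) •
                ((ι ℝ (u b) * cU (u a) x) ⊗ₜ[ℝ] y) else 0 := by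
          intro b
          rcases eq_or_ne a b with rfl | hab
          · simp
          · simp [hab]
        simp only [this]
        rw [Finset.sum_ite_eq Finset.univ a]
        simp
    -- right side double sum
    have rhs1 : θ * Tr (x ⊗ₜ[ℝ] y) =
        ∑ a : Fin m, ∑ b : Fin m, (ι ℝ (u b) * cU (u a) x) ⊗ₜ[ℝ]
          (ι ℝ (Pi.single b 1 : Fin m → ℝ) * cW (Pi.single a 1) y) := by
      rw [htr]
      simp only [TensorProduct.map_tmul]
      rw [hθdef, solder, Finset.mul_sum]
      refine Finset.sum_congr rfl fun a _ => ?_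
      rw [Finset.sum_mul]
      refine Finset.sum_congr rfl fun b _ => ?_
      rw [Algebra.TensorProduct.tmul_mul_tmul]
    -- assemble
    rw [lhs2]
    simp only [sumb]
    rw [Finset.sum_add_distrib, Finset.sum_sub_distrib, Finset.sum_sub_distrib]
    rw [Finset.sum_const, Finset.card_univ, Fintype.card_fin]
    have e1 : (∑ a : Fin m, (if (a : ℕ) < s then (-1 : ℝ) else 1) •
        (x ⊗ₜ[ℝ] (ι ℝ (Pi.single a 1 : Fin m → ℝ) * cW (Pi.single a 1) y)))
        = (hh : ℝ) • (x ⊗ₜ[ℝ] y) := by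
      calc (∑ a : Fin m, (if (a : ℕ) < s then (-1 : ℝ) else 1) •
          (x ⊗ₜ[ℝ] (ι ℝ (Pi.single a 1 : Fin m → ℝ) * cW (Pi.single a 1) y)))
          = x ⊗ₜ[ℝ] (∑ a : Fin m, (if (a : ℕ) < s then (-1 : ℝ) else 1) •
              (ι ℝ (Pi.single a 1 : Fin m → ℝ) * cW (Pi.single a 1) y)) := by
            rw [TensorProduct.tmul_sum]
            refine Finset.sum_congr rfl fun a _ => ?_
            rw [TensorProduct.tmul_smul]
        _ = x ⊗ₜ[ℝ] ((hh : ℝ) • y) := by rw [hy, eulerW hh w]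
        _ = (hh : ℝ) • (x ⊗ₜ[ℝ] y) := by rw [TensorProduct.tmul_smul]
    have e2 : (∑ a : Fin m, (if (a : ℕ) < s then (-1 : ℝ) else 1) •
        ((ι ℝ (u a) * cU (u a) x) ⊗ₜ[ℝ] y))
        = (kk : ℝ) • (x ⊗ₜ[ℝ] y) := by
      calc (∑ a : Fin m, (if (a : ℕ) < s then (-1 : ℝ) else 1) •
          ((ι ℝ (u a) * cU (u a) x) ⊗ₜ[ℝ] y))
          = (∑ a : Fin m, (if (a : ℕ) < s then (-1 : ℝ) else 1) •
              (ι ℝ (u a) * cU (u a) x)) ⊗ₜ[ℝ] y := by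
            rw [TensorProduct.sum_tmul]
            refine Finset.sum_congr rfl fun a _ => ?_
            rw [TensorProduct.smul_tmul']
        _ = ((kk : ℝ) • x) ⊗ₜ[ℝ] y := by rw [hx, eulerU kk v]
        _ = (kk : ℝ) • (x ⊗ₜ[ℝ] y) := by rw [TensorProduct.smul_tmul']
    rw [e1, e2, rhs1]
    have : (m • (x ⊗ₜ[ℝ] y) : Omega U m) = (m : ℝ) • (x ⊗ₜ[ℝ] y) :=
      (Nat.cast_smul_eq_nsmul ℝ m _).symm
    rw [this, sub_smul, sub_smul]
    abel
  -- linear reduction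
  have main : ∀ Ψ ∈ bideg U m k h,
      Tr (θ * Ψ) = θ * Tr Ψ + ((m : ℝ) - (k : ℝ) - (h : ℝ)) • Ψ := by
    set L : Omega U m →ₗ[ℝ] Omega U m :=
      Tr ∘ₗ LinearMap.mulLeft ℝ θ - LinearMap.mulLeft ℝ θ ∘ₗ Tr -
        ((m : ℝ) - (k : ℝ) - (h : ℝ)) • LinearMap.id with hLdef
    have hLapp : ∀ z, L z = Tr (θ * z) - θ * Tr z - ((m : ℝ) - (k : ℝ) - (h : ℝ)) • z := by
      intro z
      simp [hLdef, LinearMap.sub_apply, LinearMap.smul_apply, LinearMap.mulLeft_apply]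
    have hker : bideg U m k h ≤ LinearMap.ker L := by
      rw [bideg]
      refine Submodule.map₂_le.mpr ?_
      intro x hx
      rw [← ExteriorAlgebra.ιMulti_span_fixedDegree ℝ k] at hx
      induction hx using Submodule.span_induction with
      | mem x hxm =>
        obtain ⟨v, rfl⟩ := hxm
        intro y hy
        rw [← ExteriorAlgebra.ιMulti_span_fixedDegree ℝ h] at hy
        induction hy using Submodule.span_induction with
        | mem y hym =>
          obtain ⟨w, rfl⟩ := hym
          rw [LinearMap.mem_ker, hLapp]
          have hxw : (ιMulti ℝ k v : ExteriorAlgebra ℝ U) = wedgeL v := ιMulti_apply v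
          have hyw : (ιMulti ℝ h w : ExteriorAlgebra ℝ (Fin m → ℝ)) = wedgeL w := ιMulti_apply w
          have : (TensorProduct.mk ℝ (ExteriorAlgebra ℝ U) (ExteriorAlgebra ℝ (Fin m → ℝ)))
              (ιMulti ℝ k v) (ιMulti ℝ h w) = wedgeL v ⊗ₜ[ℝ] wedgeL w := by
            rw [TensorProduct.mk_apply, hxw, hyw]
          rw [this, key k h v w]
          abel
        | zero => simp
        | add y z _ _ ihy ihz =>
          rw [LinearMap.mem_ker] at ihy ihz ⊢
          rw [map_add, map_add, ihy, ihz, add_zero]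
        | smul r y _ ihy =>
          rw [LinearMap.mem_ker] at ihy ⊢
          rw [map_smul, map_smul, ihy, smul_zero]
      | zero =>
        intro y hy
        simp
      | add x z _ _ ihx ihz =>
        intro y hy
        have h1 := ihx y hy
        have h2 := ihz y hy
        rw [map_add, LinearMap.add_apply]
        exact add_mem h1 h2
      | smul r x _ ihx =>
        intro y hy
        have h1 := ihx y hy
        rw [map_smul, LinearMap.smul_apply]
        exact Submodule.smul_mem _ r h1
    intro Ψ hΨ
    have := hker hΨ
    rw [LinearMap.mem_ker, hLapp] at this
    have h2 : Tr (θ * Ψ) - θ * Tr Ψ - ((m : ℝ) - (k : ℝ) - (h : ℝ)) • Ψ = 0 := this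
    linear_combination (norm := module) h2
  exact main Φ hΦ
end
end

section
/- If k + h < m, the map Φ ↦ θ ⩕ Φ from Λ^k V* ⊗ Λ^h W to Λ^{k+1} V* ⊗ Λ^{h+1} W is injective; moreover θ ⩕ Φ = 0 implies tr^i Φ = 0 for all i = 0,…,min{k,h}. -/
open TensorProduct ExteriorAlgebra

set_option synthInstance.maxHeartbeats 1000000
set_option maxHeartbeats 1000000

noncomputable section

namespace Aux
variable {M : Type} [AddCommGroup M] [Module ℝ M]

theorem eraseIdx_map {α β : Type*} (f : α → β) : ∀ (l : List α) (i : ℕ),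
    (l.map f).eraseIdx i = (l.eraseIdx i).map f := by
  intro l
  induction l with
  | nil => intro i; simp
  | cons a l ih =>
    intro i
    cases i with
    | zero => simp
    | succ i => simp [List.eraseIdx, ih i]

lemma wedgeL_eq_iotaMulti {n : ℕ} (v : Fin n → M) : wedgeL v = ιMulti ℝ n v :=
  (ιMulti_apply v).symm

lemma listProd_mem_pow (l : List M) : (l.map (ι ℝ)).prod ∈ ⋀[ℝ]^(l.length) M := by
  induction l with
  | nil => simp [exteriorPower]
  | cons a l ih =>
    rw [List.map_cons, List.prod_cons, List.length_cons, exteriorPower, pow_succ']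
    exact Submodule.mul_mem_mul (LinearMap.mem_range_self _ _) ih

lemma wedgeL_mem {n : ℕ} (v : Fin n → M) : wedgeL v ∈ ⋀[ℝ]^n M := by
  have := listProd_mem_pow (List.ofFn v)
  rwa [List.map_ofFn, List.length_ofFn] at this

lemma erase_prod_eq : ∀ (l : List M) (i : ℕ) (h : i < l.length),
    ι ℝ (l.get ⟨i, h⟩) * ((l.map (ι ℝ)).eraseIdx i).prod
      = ((-1 : ℝ) ^ i) • (l.map (ι ℝ)).prod := by
  intro l
  induction l with
  | nil => intro i h; simp at h
  | cons a l ih =>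
    intro i h
    match i with
    | 0 => simp
    | (i+1) =>
      have hi : i < l.length := by simpa using h
      have swap : ι ℝ (l.get ⟨i, hi⟩) * ι ℝ a = - (ι ℝ a * ι ℝ (l.get ⟨i, hi⟩)) :=
        eq_neg_of_add_eq_zero_left (ι_add_mul_swap _ _)
      calc ι ℝ ((a :: l).get ⟨i+1, h⟩) * (((a :: l).map (ι ℝ)).eraseIdx (i+1)).prod
          = ι ℝ (l.get ⟨i, hi⟩) * (ι ℝ a * ((l.map (ι ℝ)).eraseIdx i).prod) := by
            show ι ℝ (l.get ⟨i, hi⟩) * (ι ℝ a :: (l.map (ι ℝ)).eraseIdx i).prod = _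
            rw [List.prod_cons]
        _ = -(ι ℝ a * (ι ℝ (l.get ⟨i, hi⟩) * ((l.map (ι ℝ)).eraseIdx i).prod)) := by
            rw [← mul_assoc, swap, neg_mul, mul_assoc]
        _ = ((-1 : ℝ) ^ (i+1)) • ((a :: l).map (ι ℝ)).prod := by
            rw [ih i hi]
            simp [pow_succ, mul_smul, mul_comm]


lemma wedgeL_cons {n : ℕ} (x : M) (v : Fin n → M) :
    wedgeL (Fin.cons x v) = ι ℝ x * wedgeL v := by
  unfold wedgeL
  rw [List.ofFn_succ, List.prod_cons]
  simp


lemma leibniz (B : M →ₗ[ℝ] M →ₗ[ℝ] ℝ) (c : M → Module.End ℝ (ExteriorAlgebra ℝ M))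
    (hc : ∀ (x : M) (n : ℕ) (v : Fin n → M),
      c x (wedgeL v) = ∑ i : Fin n, ((-1 : ℝ) ^ (i : ℕ) * B x (v i)) •
        ((List.ofFn fun j => ι ℝ (v j)).eraseIdx (i : ℕ)).prod)
    (x y : M) {n : ℕ} (v : Fin n → M) :
    c x (ι ℝ y * wedgeL v) = B x y • wedgeL v - ι ℝ y * c x (wedgeL v) := by
  rw [← wedgeL_cons, hc x (n+1) (Fin.cons y v), Fin.sum_univ_succ, hc x n v]
  have hlist : (List.ofFn fun j => ι ℝ (Fin.cons y v j))
      = ι ℝ y :: (List.ofFn fun j => ι ℝ (v j)) := by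
    rw [List.ofFn_succ]; simp
  rw [hlist]
  have h0 : (((ι ℝ y :: (List.ofFn fun j => ι ℝ (v j))).eraseIdx 0).prod) = wedgeL v := rfl
  simp only [Fin.val_zero, pow_zero, one_mul, Fin.cons_zero, h0, Fin.val_succ, Fin.cons_succ]
  simp only [Finset.mul_sum]
  rw [sub_eq_add_neg]
  congr 1
  rw [← Finset.sum_neg_distrib]
  refine Finset.sum_congr rfl fun i _ => ?_
  have he : ((ι ℝ y :: (List.ofFn fun j => ι ℝ (v j))).eraseIdx ((i:ℕ)+1)).prod
      = ι ℝ y * (((List.ofFn fun j => ι ℝ (v j)).eraseIdx (i:ℕ)).prod) := by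
    show (ι ℝ y :: ((List.ofFn fun j => ι ℝ (v j)).eraseIdx (i:ℕ))).prod = _
    rw [List.prod_cons]
  rw [he, mul_smul_comm, pow_succ,
    show ((-1:ℝ)^(i:ℕ)*(-1)*(B x (v i))) = -((-1:ℝ)^(i:ℕ)*(B x (v i))) from by ring, neg_smul]

lemma erase_prod_eq' {n : ℕ} (v : Fin n → M) (i : Fin n) :
    ι ℝ (v i) * ((List.ofFn fun j => ι ℝ (v j)).eraseIdx (i : ℕ)).prod
      = ((-1 : ℝ) ^ (i : ℕ)) • wedgeL v := by
  have h : (i : ℕ) < (List.ofFn v).length := by simp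
  have key := erase_prod_eq (List.ofFn v) (i : ℕ) h
  rw [List.get_ofFn] at key
  simp only [Fin.cast_mk] at key
  unfold wedgeL
  rw [show (List.ofFn fun j => ι ℝ (v j)) = (List.ofFn v).map (ι ℝ) from
    (List.map_ofFn (f := v) (g := ι ℝ)).symm]
  simpa using key

lemma contract_mem (c : M → Module.End ℝ (ExteriorAlgebra ℝ M))
    (B : M →ₗ[ℝ] M →ₗ[ℝ] ℝ)
    (hc : ∀ (x : M) (n : ℕ) (v : Fin n → M),
      c x (wedgeL v) = ∑ i : Fin n, ((-1 : ℝ) ^ (i : ℕ) * B x (v i)) •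
        ((List.ofFn fun j => ι ℝ (v j)).eraseIdx (i : ℕ)).prod)
    (x : M) {n : ℕ} {y : ExteriorAlgebra ℝ M} (hy : y ∈ ⋀[ℝ]^n M) :
    c x y ∈ ⋀[ℝ]^(n-1) M := by
  have hle : ⋀[ℝ]^n M ≤ Submodule.comap (c x) (⋀[ℝ]^(n-1) M) := by
    rw [← ιMulti_span_fixedDegree, Submodule.span_le]
    rintro _ ⟨v, rfl⟩
    simp only [SetLike.mem_coe, Submodule.mem_comap, ← wedgeL_eq_iotaMulti, hc]
    refine Submodule.sum_mem _ fun i _ => Submodule.smul_mem _ _ ?_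
    rw [show (List.ofFn fun j => ι ℝ (v j)) = (List.ofFn v).map (ι ℝ) from
        (List.map_ofFn (f := v) (g := ι ℝ)).symm, eraseIdx_map]
    have := listProd_mem_pow ((List.ofFn v).eraseIdx (i : ℕ))
    rwa [List.length_eraseIdx_of_lt (by simp), List.length_ofFn] at this
  simpa using hle hy

lemma contract_zero (c : M → Module.End ℝ (ExteriorAlgebra ℝ M))
    (B : M →ₗ[ℝ] M →ₗ[ℝ] ℝ)
    (hc : ∀ (x : M) (n : ℕ) (v : Fin n → M),
      c x (wedgeL v) = ∑ i : Fin n, ((-1 : ℝ) ^ (i : ℕ) * B x (v i)) •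
        ((List.ofFn fun j => ι ℝ (v j)).eraseIdx (i : ℕ)).prod)
    (x : M) {y : ExteriorAlgebra ℝ M} (hy : y ∈ ⋀[ℝ]^0 M) :
    c x y = 0 := by
  rw [exteriorPower, pow_zero] at hy
  obtain ⟨r, rfl⟩ := Submodule.mem_one.mp hy
  have h1 : c x 1 = 0 := by
    have := hc x 0 (fun i => i.elim0)
    simpa [wedgeL] using this
  rw [Algebra.algebraMap_eq_smul_one, map_smul, h1, smul_zero]

lemma number (c : M → Module.End ℝ (ExteriorAlgebra ℝ M))
    (B : M →ₗ[ℝ] M →ₗ[ℝ] ℝ)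
    (hc : ∀ (x : M) (n : ℕ) (v : Fin n → M),
      c x (wedgeL v) = ∑ i : Fin n, ((-1 : ℝ) ^ (i : ℕ) * B x (v i)) •
        ((List.ofFn fun j => ι ℝ (v j)).eraseIdx (i : ℕ)).prod)
    {N s : ℕ} (f : Fin N → M)
    (hf : ∀ x : M, ∑ a : Fin N, ((if (a : ℕ) < s then (-1 : ℝ) else 1) * B (f a) x) • f a = x)
    {n : ℕ} (v : Fin n → M) :
    ∑ a : Fin N, (if (a : ℕ) < s then (-1 : ℝ) else 1) • (ι ℝ (f a) * c (f a) (wedgeL v))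
      = (n : ℝ) • wedgeL v := by
  set ε : Fin N → ℝ := fun a => if (a : ℕ) < s then (-1 : ℝ) else 1 with hε
  have step : ∀ a, ε a • (ι ℝ (f a) * c (f a) (wedgeL v))
      = ∑ i : Fin n, ((-1 : ℝ) ^ (i : ℕ)) • (((ε a * B (f a) (v i)) • ι ℝ (f a)) *
          ((List.ofFn fun j => ι ℝ (v j)).eraseIdx (i : ℕ)).prod) := by
    intro a
    rw [hc, Finset.mul_sum, Finset.smul_sum]
    refine Finset.sum_congr rfl fun i _ => ?_
    rw [mul_smul_comm, smul_smul, smul_mul_assoc, smul_smul]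
    congr 1
    ring
  calc ∑ a : Fin N, ε a • (ι ℝ (f a) * c (f a) (wedgeL v))
      = ∑ a, ∑ i : Fin n, ((-1 : ℝ) ^ (i : ℕ)) • (((ε a * B (f a) (v i)) • ι ℝ (f a)) *
          ((List.ofFn fun j => ι ℝ (v j)).eraseIdx (i : ℕ)).prod) := by
        exact Finset.sum_congr rfl fun a _ => step a
    _ = ∑ i : Fin n, ((-1 : ℝ) ^ (i : ℕ)) • ((∑ a : Fin N, (ε a * B (f a) (v i)) • ι ℝ (f a)) *
          ((List.ofFn fun j => ι ℝ (v j)).eraseIdx (i : ℕ)).prod) := by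
        rw [Finset.sum_comm]
        refine Finset.sum_congr rfl fun i _ => ?_
        rw [← Finset.smul_sum, ← Finset.sum_mul]
    _ = ∑ i : Fin n, ((-1 : ℝ) ^ (i : ℕ)) • (ι ℝ (v i) *
          ((List.ofFn fun j => ι ℝ (v j)).eraseIdx (i : ℕ)).prod) := by
        refine Finset.sum_congr rfl fun i _ => ?_
        congr 2
        rw [show ∑ a : Fin N, (ε a * B (f a) (v i)) • ι ℝ (f a)
            = ι ℝ (∑ a : Fin N, (ε a * B (f a) (v i)) • f a) by rw [map_sum]; simp,
          hf (v i)]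
    _ = ∑ _i : Fin n, wedgeL v := by
        refine Finset.sum_congr rfl fun i _ => ?_
        rw [erase_prod_eq' v i, smul_smul, ← mul_pow]
        simp
    _ = (n : ℝ) • wedgeL v := by
        rw [Finset.sum_const, Finset.card_univ, Fintype.card_fin,
          ← Nat.cast_smul_eq_nsmul ℝ]

lemma eta_basis (η : (Fin m → ℝ) →ₗ[ℝ] (Fin m → ℝ) →ₗ[ℝ] ℝ)
    (hη : ∀ v w, η v w = ∑ a : Fin m, (if (a : ℕ) < s then (-1 : ℝ) else 1) * v a * w a)
    (b a : Fin m) :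
    η (Pi.single b 1) (Pi.single a 1) = if b = a then (if (a : ℕ) < s then (-1 : ℝ) else 1) else 0 := by
  rw [hη]
  simp only [Pi.single_apply, mul_ite, ite_mul, mul_one, mul_zero, zero_mul, one_mul]
  by_cases hba : b = a
  · subst hba
    simp
  · simp [Finset.sum_ite_eq, hba, Ne.symm hba]

lemma hfW (η : (Fin m → ℝ) →ₗ[ℝ] (Fin m → ℝ) →ₗ[ℝ] ℝ)
    (hη : ∀ v w, η v w = ∑ a : Fin m, (if (a : ℕ) < s then (-1 : ℝ) else 1) * v a * w a)
    (x : Fin m → ℝ) :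
    ∑ a : Fin m, ((if (a : ℕ) < s then (-1 : ℝ) else 1) * η (Pi.single a 1) x) •
      (Pi.single a 1 : Fin m → ℝ) = x := by
  have h1 : ∀ a : Fin m, η (Pi.single a 1) x = (if (a : ℕ) < s then (-1 : ℝ) else 1) * x a := by
    intro a
    rw [hη]
    simp only [Pi.single_apply, mul_ite, ite_mul, mul_one, mul_zero, zero_mul, one_mul]
    rw [Finset.sum_ite_eq' Finset.univ a]
    simp
  calc ∑ a : Fin m, ((if (a : ℕ) < s then (-1 : ℝ) else 1) * η (Pi.single a 1) x) •
        (Pi.single a 1 : Fin m → ℝ)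
      = ∑ a : Fin m, (Pi.single a (x a) : Fin m → ℝ) := by
        refine Finset.sum_congr rfl fun a _ => ?_
        rw [h1]
        by_cases hs : (a : ℕ) < s <;>
          · simp only [hs, if_true, if_false]
            funext j
            simp [Pi.single_apply]
            try ring_nf
            try simp [mul_comm]
    _ = x := by
        funext j
        rw [Finset.sum_apply]
        simp [Pi.single_apply, Finset.sum_ite_eq]

lemma hfU {U : Type} [AddCommGroup U] [Module ℝ U]
    (g : U →ₗ[ℝ] U →ₗ[ℝ] ℝ) (u : Module.Basis (Fin m) ℝ U)
    (hg : ∀ a b, g (u a) (u b) = if a = b then (if (a : ℕ) < s then (-1 : ℝ) else 1) else 0)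
    (x : U) :
    ∑ a : Fin m, ((if (a : ℕ) < s then (-1 : ℝ) else 1) * g (u a) x) • u a = x := by
  have h1 : ∀ a : Fin m, g (u a) x = (if (a : ℕ) < s then (-1 : ℝ) else 1) * u.repr x a := by
    intro a
    conv_lhs => rw [← u.sum_repr x]
    rw [map_sum]
    simp only [map_smul, hg, smul_eq_mul, mul_ite, mul_zero]
    rw [Finset.sum_ite_eq Finset.univ a]
    by_cases hs : (a : ℕ) < s <;> simp [hs, mul_comm]
  calc ∑ a : Fin m, ((if (a : ℕ) < s then (-1 : ℝ) else 1) * g (u a) x) • u a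
      = ∑ a : Fin m, (u.repr x a) • u a := by
        refine Finset.sum_congr rfl fun a _ => ?_
        rw [h1]
        by_cases hs : (a : ℕ) < s <;> simp [hs]
    _ = x := u.sum_repr x


lemma iota_mul_mem {M : Type} [AddCommGroup M] [Module ℝ M] (x : M) {n : ℕ}
    {y : ExteriorAlgebra ℝ M} (hy : y ∈ ⋀[ℝ]^n M) : ι ℝ x * y ∈ ⋀[ℝ]^(n+1) M := by
  rw [exteriorPower, pow_succ']
  exact Submodule.mul_mem_mul (LinearMap.mem_range_self _ _) hy

end Aux

namespace Aux2
open Aux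

variable {U : Type} [AddCommGroup U] [Module ℝ U] {m s : ℕ}

lemma solder_mul_mem (f : Fin m → U) {p q : ℕ} {Φ : Omega U m} (hΦ : Φ ∈ bideg U m p q) :
    solder f * Φ ∈ bideg U m (p+1) (q+1) := by
  have hle : bideg U m p q ≤
      Submodule.comap (LinearMap.mulLeft ℝ (solder f)) (bideg U m (p+1) (q+1)) := by
    refine Submodule.map₂_le.mpr fun α hα β hβ => ?_
    simp only [Submodule.mem_comap, LinearMap.mulLeft_apply, TensorProduct.mk_apply]
    unfold solder
    rw [Finset.sum_mul]
    refine Submodule.sum_mem _ fun a _ => ?_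
    rw [Algebra.TensorProduct.tmul_mul_tmul]
    exact Submodule.apply_mem_map₂ _ (iota_mul_mem _ hα) (iota_mul_mem _ hβ)
  exact hle hΦ

variable (g : U →ₗ[ℝ] U →ₗ[ℝ] ℝ)
  (η : (Fin m → ℝ) →ₗ[ℝ] (Fin m → ℝ) →ₗ[ℝ] ℝ)
  (cU : U → Module.End ℝ (ExteriorAlgebra ℝ U))
  (cW : (Fin m → ℝ) → Module.End ℝ (ExteriorAlgebra ℝ (Fin m → ℝ)))
  (hcU : ∀ (x : U) (n : ℕ) (v : Fin n → U),
      cU x (wedgeL v) = ∑ i : Fin n, ((-1 : ℝ) ^ (i : ℕ) * g x (v i)) •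
        ((List.ofFn fun j => ι ℝ (v j)).eraseIdx (i : ℕ)).prod)
  (hcW : ∀ (y : Fin m → ℝ) (n : ℕ) (v : Fin n → (Fin m → ℝ)),
      cW y (wedgeL v) = ∑ i : Fin n, ((-1 : ℝ) ^ (i : ℕ) * η y (v i)) •
        ((List.ofFn fun j => ι ℝ (v j)).eraseIdx (i : ℕ)).prod)

include hcU hcW in
lemma trOp_mem (f : Fin m → U) {p q : ℕ} {Φ : Omega U m} (hΦ : Φ ∈ bideg U m p q) :
    trOp f cU cW Φ ∈ bideg U m (p-1) (q-1) := by
  have hle : bideg U m p q ≤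
      Submodule.comap (trOp f cU cW) (bideg U m (p-1) (q-1)) := by
    refine Submodule.map₂_le.mpr fun α hα β hβ => ?_
    simp only [Submodule.mem_comap, TensorProduct.mk_apply]
    unfold trOp
    rw [LinearMap.sum_apply]
    refine Submodule.sum_mem _ fun a _ => ?_
    rw [TensorProduct.map_tmul]
    exact Submodule.apply_mem_map₂ _ (contract_mem cU g hcU _ hα) (contract_mem cW η hcW _ hβ)
  exact hle hΦ

include hcU hcW in
lemma trOp_zero_left (f : Fin m → U) {q : ℕ} {Φ : Omega U m} (hΦ : Φ ∈ bideg U m 0 q) :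
    trOp f cU cW Φ = 0 := by
  have hle : bideg U m 0 q ≤ LinearMap.ker (trOp f cU cW) := by
    refine Submodule.map₂_le.mpr fun α hα β hβ => ?_
    simp only [LinearMap.mem_ker, TensorProduct.mk_apply]
    unfold trOp
    rw [LinearMap.sum_apply]
    refine Finset.sum_eq_zero fun a _ => ?_
    rw [TensorProduct.map_tmul, contract_zero cU g hcU _ hα, TensorProduct.zero_tmul]
  exact hle hΦ

include hcU hcW in
lemma trOp_zero_right (f : Fin m → U) {p : ℕ} {Φ : Omega U m} (hΦ : Φ ∈ bideg U m p 0) :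
    trOp f cU cW Φ = 0 := by
  have hle : bideg U m p 0 ≤ LinearMap.ker (trOp f cU cW) := by
    refine Submodule.map₂_le.mpr fun α hα β hβ => ?_
    simp only [LinearMap.mem_ker, TensorProduct.mk_apply]
    unfold trOp
    rw [LinearMap.sum_apply]
    refine Finset.sum_eq_zero fun a _ => ?_
    rw [TensorProduct.map_tmul, contract_zero cW η hcW _ hβ, TensorProduct.tmul_zero]
  exact hle hΦ

variable (u : Module.Basis (Fin m) ℝ U)
  (hg : ∀ a b, g (u a) (u b) = if a = b then (if (a : ℕ) < s then (-1 : ℝ) else 1) else 0)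
  (hη : ∀ v w, η v w = ∑ a : Fin m, (if (a : ℕ) < s then (-1 : ℝ) else 1) * v a * w a)

lemma solder_tmul (f : Fin m → U) (x : ExteriorAlgebra ℝ U)
    (y : ExteriorAlgebra ℝ (Fin m → ℝ)) :
    solder f * (x ⊗ₜ[ℝ] y)
      = ∑ a : Fin m, (ι ℝ (f a) * x) ⊗ₜ[ℝ] (ι ℝ (Pi.single a 1 : Fin m → ℝ) * y) := by
  unfold solder
  rw [Finset.sum_mul]
  exact Finset.sum_congr rfl fun a _ => Algebra.TensorProduct.tmul_mul_tmul _ _ _ _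

lemma trOp_tmul (f : Fin m → U) (x : ExteriorAlgebra ℝ U)
    (y : ExteriorAlgebra ℝ (Fin m → ℝ)) :
    trOp f cU cW (x ⊗ₜ[ℝ] y)
      = ∑ b : Fin m, (cU (f b) x) ⊗ₜ[ℝ] (cW (Pi.single b 1 : Fin m → ℝ) y) := by
  unfold trOp
  rw [LinearMap.sum_apply]
  exact Finset.sum_congr rfl fun b _ => TensorProduct.map_tmul _ _ _ _

include hg hη hcU hcW in
lemma core {p q : ℕ} (v : Fin p → U) (w : Fin q → (Fin m → ℝ)) :
    trOp (fun a => u a) cU cW (solder (fun a => u a) * (wedgeL v ⊗ₜ[ℝ] wedgeL w))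
      = ((m : ℝ) - p - q) • (wedgeL v ⊗ₜ[ℝ] wedgeL w)
        + solder (fun a => u a) * (trOp (fun a => u a) cU cW (wedgeL v ⊗ₜ[ℝ] wedgeL w)) := by
  have hηe : ∀ b a : Fin m, η (Pi.single b 1) (Pi.single a 1)
      = if b = a then (if (b : ℕ) < s then (-1 : ℝ) else 1) else 0 := by
    intro b a
    rw [eta_basis η hη]
    by_cases h : b = a
    · subst h; rfl
    · simp [h]
  have hge : ∀ b a : Fin m, g (u b) (u a)
      = if b = a then (if (b : ℕ) < s then (-1 : ℝ) else 1) else 0 := fun b a => hg b a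
  -- expand L then T
  rw [solder_tmul, map_sum]
  have hstep : ∀ a : Fin m,
      trOp (fun a => u a) cU cW ((ι ℝ (u a) * wedgeL v) ⊗ₜ[ℝ]
        (ι ℝ (Pi.single a 1 : Fin m → ℝ) * wedgeL w))
      = ∑ b : Fin m,
          ((g (u b) (u a) * η (Pi.single b 1) (Pi.single a 1)) • (wedgeL v ⊗ₜ[ℝ] wedgeL w)
          - g (u b) (u a) • (wedgeL v ⊗ₜ[ℝ]
              (ι ℝ (Pi.single a 1 : Fin m → ℝ) * cW (Pi.single b 1) (wedgeL w)))
          - η (Pi.single b 1) (Pi.single a 1) •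
              ((ι ℝ (u a) * cU (u b) (wedgeL v)) ⊗ₜ[ℝ] wedgeL w)
          + (ι ℝ (u a) * cU (u b) (wedgeL v)) ⊗ₜ[ℝ]
              (ι ℝ (Pi.single a 1 : Fin m → ℝ) * cW (Pi.single b 1) (wedgeL w))) := by
    intro a
    rw [trOp_tmul]
    refine Finset.sum_congr rfl fun b _ => ?_
    rw [leibniz g cU hcU (u b) (u a) v, leibniz η cW hcW (Pi.single b 1) (Pi.single a 1) w]
    simp only [TensorProduct.sub_tmul, TensorProduct.tmul_sub, smul_sub,
      ← TensorProduct.smul_tmul', TensorProduct.tmul_smul, smul_smul]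
    module
  simp only [hstep]
  simp only [Finset.sum_add_distrib, Finset.sum_sub_distrib]
  have hcollapse : ∀ (Y : Fin m → Omega U m) (a : Fin m),
      ∑ b : Fin m, (if b = a then (if (b : ℕ) < s then (-1:ℝ) else 1) else 0) • Y b
        = (if (a : ℕ) < s then (-1:ℝ) else 1) • Y a := by
    intro Y a
    rw [Finset.sum_eq_single a (fun b _ hb => by simp [hb])
      (fun h => absurd (Finset.mem_univ a) h)]
    simp
  have hP1 : (∑ a : Fin m, ∑ b : Fin m,
      (g (u b) (u a) * η (Pi.single b 1) (Pi.single a 1)) • (wedgeL v ⊗ₜ[ℝ] wedgeL w))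
      = (m : ℝ) • (wedgeL v ⊗ₜ[ℝ] wedgeL w) := by
    have h1 : ∀ a b : Fin m, g (u b) (u a) * η (Pi.single b 1) (Pi.single a 1)
        = if b = a then 1 else 0 := by
      intro a b
      rw [hge, hηe]
      by_cases h : b = a
      · subst h; by_cases hs : (b : ℕ) < s <;> simp [hs]
      · simp [h]
    calc (∑ a : Fin m, ∑ b : Fin m,
        (g (u b) (u a) * η (Pi.single b 1) (Pi.single a 1)) • (wedgeL v ⊗ₜ[ℝ] wedgeL w))
        = ∑ a : Fin m, wedgeL v ⊗ₜ[ℝ] wedgeL w := by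
          refine Finset.sum_congr rfl fun a _ => ?_
          simp only [h1]
          rw [Finset.sum_eq_single a (fun b _ hb => by simp [hb])
            (fun h => absurd (Finset.mem_univ a) h)]
          simp
      _ = (m : ℝ) • (wedgeL v ⊗ₜ[ℝ] wedgeL w) := by
          rw [Finset.sum_const, Finset.card_univ, Fintype.card_fin,
            ← Nat.cast_smul_eq_nsmul ℝ]
  have hP2 : (∑ a : Fin m, ∑ b : Fin m,
      g (u b) (u a) • (wedgeL v ⊗ₜ[ℝ]
        (ι ℝ (Pi.single a 1 : Fin m → ℝ) * cW (Pi.single b 1) (wedgeL w))))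
      = (q : ℝ) • (wedgeL v ⊗ₜ[ℝ] wedgeL w) := by
    calc (∑ a : Fin m, ∑ b : Fin m,
        g (u b) (u a) • (wedgeL v ⊗ₜ[ℝ]
          (ι ℝ (Pi.single a 1 : Fin m → ℝ) * cW (Pi.single b 1) (wedgeL w))))
        = ∑ a : Fin m, (if (a : ℕ) < s then (-1:ℝ) else 1) • (wedgeL v ⊗ₜ[ℝ]
            (ι ℝ (Pi.single a 1 : Fin m → ℝ) * cW (Pi.single a 1) (wedgeL w))) := by
          refine Finset.sum_congr rfl fun a _ => ?_
          simp only [hge]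
          exact hcollapse _ a
      _ = wedgeL v ⊗ₜ[ℝ] (∑ a : Fin m, (if (a : ℕ) < s then (-1:ℝ) else 1) •
            (ι ℝ (Pi.single a 1 : Fin m → ℝ) * cW (Pi.single a 1) (wedgeL w))) := by
          rw [TensorProduct.tmul_sum]
          exact Finset.sum_congr rfl fun a _ => (TensorProduct.tmul_smul _ _ _).symm
      _ = (q : ℝ) • (wedgeL v ⊗ₜ[ℝ] wedgeL w) := by
          rw [number cW η hcW (fun a : Fin m => (Pi.single a 1 : Fin m → ℝ))
            (hfW η hη) w, TensorProduct.tmul_smul]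
  have hP3 : (∑ a : Fin m, ∑ b : Fin m,
      η (Pi.single b 1) (Pi.single a 1) •
        ((ι ℝ (u a) * cU (u b) (wedgeL v)) ⊗ₜ[ℝ] wedgeL w))
      = (p : ℝ) • (wedgeL v ⊗ₜ[ℝ] wedgeL w) := by
    calc (∑ a : Fin m, ∑ b : Fin m,
        η (Pi.single b 1) (Pi.single a 1) •
          ((ι ℝ (u a) * cU (u b) (wedgeL v)) ⊗ₜ[ℝ] wedgeL w))
        = ∑ a : Fin m, (if (a : ℕ) < s then (-1:ℝ) else 1) •
            ((ι ℝ (u a) * cU (u a) (wedgeL v)) ⊗ₜ[ℝ] wedgeL w) := by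
          refine Finset.sum_congr rfl fun a _ => ?_
          simp only [hηe]
          exact hcollapse _ a
      _ = (∑ a : Fin m, (if (a : ℕ) < s then (-1:ℝ) else 1) •
            (ι ℝ (u a) * cU (u a) (wedgeL v))) ⊗ₜ[ℝ] wedgeL w := by
          rw [TensorProduct.sum_tmul]
          exact Finset.sum_congr rfl fun a _ => (TensorProduct.smul_tmul' _ _ _).symm
      _ = (p : ℝ) • (wedgeL v ⊗ₜ[ℝ] wedgeL w) := by
          rw [number cU g hcU (fun a : Fin m => u a) (hfU g u hg) v,
            TensorProduct.smul_tmul']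
  have hP4 : (∑ a : Fin m, ∑ b : Fin m,
      (ι ℝ (u a) * cU (u b) (wedgeL v)) ⊗ₜ[ℝ]
        (ι ℝ (Pi.single a 1 : Fin m → ℝ) * cW (Pi.single b 1) (wedgeL w)))
      = solder (fun a => u a) * (trOp (fun a => u a) cU cW (wedgeL v ⊗ₜ[ℝ] wedgeL w)) := by
    rw [trOp_tmul, Finset.mul_sum]
    rw [Finset.sum_comm]
    exact Finset.sum_congr rfl fun b _ => (solder_tmul _ _ _).symm
  rw [hP1, hP2, hP3, hP4, sub_smul, sub_smul]
  abel

include hg hη hcU hcW in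
lemma comm_bideg {p q : ℕ} {Φ : Omega U m} (hΦ : Φ ∈ bideg U m p q) :
    trOp (fun a => u a) cU cW (solder (fun a => u a) * Φ)
      = ((m : ℝ) - p - q) • Φ + solder (fun a => u a) * trOp (fun a => u a) cU cW Φ := by
  set T := trOp (fun a => u a) cU cW with hT
  set L := LinearMap.mulLeft ℝ (solder (fun a => u a)) with hL
  have hker : ∀ X : Omega U m,
      X ∈ LinearMap.ker (T ∘ₗ L - (((m : ℝ) - p - q) • (LinearMap.id : Omega U m →ₗ[ℝ] Omega U m)
        + L ∘ₗ T))
      ↔ T (solder (fun a => u a) * X)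
          = ((m : ℝ) - p - q) • X + solder (fun a => u a) * T X := by
    intro X
    rw [LinearMap.mem_ker, LinearMap.sub_apply, LinearMap.add_apply, LinearMap.comp_apply,
      LinearMap.comp_apply, LinearMap.smul_apply, LinearMap.id_apply, sub_eq_zero,
      LinearMap.mulLeft_apply, LinearMap.mulLeft_apply]
  have hle : bideg U m p q ≤ LinearMap.ker (T ∘ₗ L
      - (((m : ℝ) - p - q) • (LinearMap.id : Omega U m →ₗ[ℝ] Omega U m) + L ∘ₗ T)) := by
    refine Submodule.map₂_le.mpr fun α hα β hβ => ?_
    rw [← ιMulti_span_fixedDegree] at hα hβ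
    induction hα using Submodule.span_induction with
    | mem x hx =>
      induction hβ using Submodule.span_induction with
      | mem y hy =>
        obtain ⟨v, rfl⟩ := hx
        obtain ⟨w, rfl⟩ := hy
        rw [hker, TensorProduct.mk_apply, ← wedgeL_eq_iotaMulti, ← wedgeL_eq_iotaMulti]
        exact core g η cU cW hcU hcW u hg hη v w
      | zero => rw [map_zero]; exact zero_mem _
      | add y z _ _ hy' hz' => rw [map_add]; exact add_mem hy' hz'
      | smul r y _ hy' => rw [map_smul]; exact Submodule.smul_mem _ _ hy'
    | zero =>
      rw [show (TensorProduct.mk ℝ (ExteriorAlgebra ℝ U) (ExteriorAlgebra ℝ (Fin m → ℝ))) 0 β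
        = 0 by simp]
      exact zero_mem _
    | add x y _ _ hx' hy' =>
      rw [show (TensorProduct.mk ℝ (ExteriorAlgebra ℝ U) (ExteriorAlgebra ℝ (Fin m → ℝ))) (x + y) β
        = TensorProduct.mk ℝ _ _ x β + TensorProduct.mk ℝ _ _ y β by simp [TensorProduct.add_tmul]]
      exact add_mem hx' hy'
    | smul r x _ hx' =>
      rw [show (TensorProduct.mk ℝ (ExteriorAlgebra ℝ U) (ExteriorAlgebra ℝ (Fin m → ℝ))) (r • x) β
        = r • TensorProduct.mk ℝ _ _ x β by simp [TensorProduct.smul_tmul']]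
      exact Submodule.smul_mem _ _ hx'
  exact (hker Φ).mp (hle hΦ)

include hg hη hcU hcW in
lemma iter : ∀ (j p q : ℕ), j ≤ min p q + 1 → ∀ {Φ : Omega U m}, Φ ∈ bideg U m p q →
    (trOp (fun a => u a) cU cW ^ j) (solder (fun a => u a) * Φ)
      = solder (fun a => u a) * ((trOp (fun a => u a) cU cW ^ j) Φ)
        + (∑ i ∈ Finset.range j, ((m : ℝ) - p - q + 2 * i)) •
            ((trOp (fun a => u a) cU cW ^ (j - 1)) Φ) := by
  intro j
  induction j with
  | zero => intro p q _ Φ hΦ; simp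
  | succ j ih =>
    intro p q hj Φ hΦ
    have hcomm := comm_bideg g η cU cW hcU hcW u hg hη hΦ
    rw [pow_succ, Module.End.mul_apply, hcomm, map_add, map_smul]
    cases j with
    | zero =>
      simp only [zero_add, pow_one, pow_zero, one_mul, Module.End.one_apply,
        Finset.sum_range_one, Nat.cast_zero, mul_zero, add_zero, Nat.sub_self]
      abel
    | succ j' =>
      have hp : 1 ≤ p := by omega
      have hq : 1 ≤ q := by omega
      have hTΦ : trOp (fun a => u a) cU cW Φ ∈ bideg U m (p - 1) (q - 1) :=
        trOp_mem g η cU cW hcU hcW _ hΦ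
      have hih := ih (p - 1) (q - 1) (by omega) hTΦ
      rw [hih]
      have h1 : ((trOp (fun a => u a) cU cW ^ (j' + 1))
          ((trOp (fun a => u a) cU cW) Φ))
          = (trOp (fun a => u a) cU cW ^ (j' + 2)) Φ := by
        conv_rhs => rw [show j' + 2 = (j' + 1) + 1 from rfl, pow_succ, Module.End.mul_apply]
      have h2 : ((trOp (fun a => u a) cU cW ^ (j' + 1 - 1))
          ((trOp (fun a => u a) cU cW) Φ))
          = (trOp (fun a => u a) cU cW ^ (j' + 1)) Φ := by
        rw [Nat.add_sub_cancel]
        conv_rhs => rw [pow_succ, Module.End.mul_apply]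
      rw [h1, h2]
      have hsum : (∑ i ∈ Finset.range (j' + 2), ((m : ℝ) - p - q + 2 * i))
          = ((m : ℝ) - p - q)
            + ∑ i ∈ Finset.range (j' + 1), ((m : ℝ) - ↑(p - 1) - ↑(q - 1) + 2 * i) := by
        rw [Finset.sum_range_succ']
        have hterm : ∀ i : ℕ, ((m : ℝ) - p - q + 2 * (↑(i + 1) : ℝ))
            = ((m : ℝ) - ↑(p - 1) - ↑(q - 1) + 2 * i) := by
          intro i
          rw [Nat.cast_sub hp, Nat.cast_sub hq]
          push_cast
          ring
        rw [Finset.sum_congr rfl fun i _ => hterm i]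
        push_cast
        ring
      rw [Nat.add_sub_cancel, hsum, add_smul, ← pow_succ]
      abel

end Aux2

/-- For `k + h < m`, the map `Φ ↦ θ ⩕ Φ` is injective on bidegree `(k,h)`; moreover
`θ ⩕ Φ = 0` implies `tr^i Φ = 0` for all `i = 0, …, min{k,h}`. -/
theorem stmt_15 (m r s k h : ℕ) (hm : r + s = m) (hkh : k + h < m)
    (U : Type) [AddCommGroup U] [Module ℝ U]
    (η : (Fin m → ℝ) →ₗ[ℝ] (Fin m → ℝ) →ₗ[ℝ] ℝ)
    (hη : ∀ v w, η v w = ∑ a : Fin _, (if (a : ℕ) < s then (-1 : ℝ) else 1) * v a * w a)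
    (g : U →ₗ[ℝ] U →ₗ[ℝ] ℝ) (u : Module.Basis (Fin m) ℝ U)
    (hg : ∀ a b, g (u a) (u b) = if a = b then (if (a : ℕ) < s then (-1 : ℝ) else 1) else 0)
    (cU : U → Module.End ℝ (ExteriorAlgebra ℝ U))
    (hcU : ∀ (x : U) (n : ℕ) (v : Fin n → U),
      cU x (wedgeL v) = ∑ i : Fin n, ((-1 : ℝ) ^ (i : ℕ) * g x (v i)) •
        ((List.ofFn fun j => ι ℝ (v j)).eraseIdx (i : ℕ)).prod)
    (cW : (Fin m → ℝ) → Module.End ℝ (ExteriorAlgebra ℝ (Fin m → ℝ)))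
    (hcW : ∀ (y : Fin m → ℝ) (n : ℕ) (v : Fin n → (Fin m → ℝ)),
      cW y (wedgeL v) = ∑ i : Fin n, ((-1 : ℝ) ^ (i : ℕ) * η y (v i)) •
        ((List.ofFn fun j => ι ℝ (v j)).eraseIdx (i : ℕ)).prod)
    :
    (∀ Φ Ψ, Φ ∈ bideg U m k h → Ψ ∈ bideg U m k h →
      solder (fun a => u a) * Φ = solder (fun a => u a) * Ψ → Φ = Ψ) ∧
    (∀ Φ, Φ ∈ bideg U m k h → solder (fun a => u a) * Φ = 0 →
      ∀ i ≤ min k h, (trOp (fun a => u a) cU cW ^ i) Φ = 0) := by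
  have main : ∀ Φ ∈ bideg U m k h, solder (fun a => u a) * Φ = 0 → Φ = 0 := by
    intro Φ hΦ h0
    have hdeg : ∀ i : ℕ,
        (trOp (fun a => u a) cU cW ^ i) Φ ∈ bideg U m (k - i) (h - i) := by
      intro i
      induction i with
      | zero => simpa using hΦ
      | succ i ihh =>
        rw [pow_succ', Module.End.mul_apply]
        have hmem := Aux2.trOp_mem g η cU cW hcU hcW (fun a => u a) ihh
        rwa [Nat.sub_sub, Nat.sub_sub] at hmem
    have hTtop : (trOp (fun a => u a) cU cW ^ (min k h + 1)) Φ = 0 := by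
      rw [pow_succ', Module.End.mul_apply]
      have hmem := hdeg (min k h)
      rcases le_total k h with hkh' | hkh'
      · have e0 : k - min k h = 0 := by omega
        rw [e0] at hmem
        exact Aux2.trOp_zero_left g η cU cW hcU hcW (fun a => u a) hmem
      · have e0 : h - min k h = 0 := by omega
        rw [e0] at hmem
        exact Aux2.trOp_zero_right g η cU cW hcU hcW (fun a => u a) hmem
    have hdown : ∀ j, j ≤ min k h + 1 →
        (trOp (fun a => u a) cU cW ^ (min k h + 1 - j)) Φ = 0 := by
      intro j
      induction j with
      | zero => intro _; simpa using hTtop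
      | succ j ihj =>
        intro hj
        have hprev := ihj (by omega)
        have hiter := Aux2.iter g η cU cW hcU hcW u hg hη
          (min k h + 1 - j) k h (by omega) hΦ
        rw [h0, map_zero, hprev, mul_zero, zero_add] at hiter
        have hpos : (0:ℝ) < ∑ i ∈ Finset.range (min k h + 1 - j),
            ((m : ℝ) - k - h + 2 * i) := by
          apply Finset.sum_pos
          · intro i _
            have h1 : (k:ℝ) + h < m := by exact_mod_cast hkh
            have h2 : (0:ℝ) ≤ 2 * i := by positivity
            linarith
          · exact Finset.nonempty_range_iff.mpr (by omega)
        have hz : (trOp (fun a => u a) cU cW ^ (min k h + 1 - j - 1)) Φ = 0 := by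
          rcases smul_eq_zero.mp hiter.symm with hc | hx
          · exact absurd hc (ne_of_gt hpos)
          · exact hx
        rw [show min k h + 1 - (j + 1) = min k h + 1 - j - 1 by omega]
        exact hz
    have hfin := hdown (min k h + 1) le_rfl
    simpa using hfin
  constructor
  · intro Φ Ψ hΦ hΨ he
    have hsub : solder (fun a => u a) * (Φ - Ψ) = 0 := by rw [mul_sub, he, sub_self]
    exact sub_eq_zero.mp (main _ (sub_mem hΦ hΨ) hsub)
  · intro Φ hΦ h0 i _
    rw [main Φ hΦ h0, map_zero]
end
end
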